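/- If ω : [0,1] → X is Lipschitz continuous in a metric space (X,d), then the metric derivative |ω'|(t) := lim_{h→0} d(ω(t+h), ω(t))/|h| exists for almost every t ∈ [0,1], and for all 0 ≤ t < s ≤ 1, d(ω(t), ω(s)) ≤ ∫_t^s |ω'|(τ) dτ. -/

import Mathlib

open MeasureTheory Filter
open Set Topology


lemma mdaux_abs_deriv_le {ψ : ℝ → ℝ} {K : NNReal} (hψ : LipschitzWith K ψ) (x : ℝ) :
    |deriv ψ x| ≤ K := by
  by_cases hd : DifferentiableAt ℝ ψ x
  · have h := hasDerivAt_iff_tendsto_slope_zero.1 hd.hasDerivAt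
    have habs : Tendsto (fun t : ℝ => |t⁻¹ • (ψ (x + t) - ψ x)|) (𝓝[≠] 0)
        (𝓝 |deriv ψ x|) := h.abs
    refine le_of_tendsto habs ?_
    filter_upwards [self_mem_nhdsWithin] with t (ht : t ≠ 0)
    have hb : |ψ (x + t) - ψ x| ≤ K * |t| := by
      have := hψ.dist_le_mul (x + t) x
      simpa [Real.dist_eq, add_sub_cancel_left] using this
    have ht' : 0 < |t| := abs_pos.2 ht
    rw [smul_eq_mul, abs_mul, abs_inv]
    calc |t|⁻¹ * |ψ (x + t) - ψ x| ≤ |t|⁻¹ * (K * |t|) := by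
          exact mul_le_mul_of_nonneg_left hb (by positivity)
      _ = K := by field_simp
  · simp [deriv_zero_of_not_differentiableAt hd]

lemma mdaux_tendsto_h : Tendsto (fun n : ℕ => ((n : ℝ) + 1)⁻¹) atTop (𝓝[≠] (0:ℝ)) := by
  apply tendsto_nhdsWithin_of_tendsto_nhds_of_eventually_within
  · exact tendsto_one_div_add_atTop_nhds_zero_nat.congr (by simp [one_div])
  · filter_upwards with n
    simp only [Set.mem_compl_iff, Set.mem_singleton_iff]
    positivity

lemma mdaux_lip_ftc {ψ : ℝ → ℝ} {K : NNReal} (hψ : LipschitzWith K ψ) (a b : ℝ) :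
    ψ b - ψ a = ∫ τ in a..b, deriv ψ τ := by
  set h : ℕ → ℝ := fun n => ((n : ℝ) + 1)⁻¹ with hh
  have hpos : ∀ n, 0 < h n := fun n => by positivity
  have hcont := hψ.continuous
  have hii : ∀ c d : ℝ, IntervalIntegrable ψ volume c d := fun c d =>
    hcont.intervalIntegrable c d
  set F : ℕ → ℝ → ℝ := fun n τ => (h n)⁻¹ • (ψ (τ + h n) - ψ τ) with hF
  -- dominated convergence
  have step1 : Tendsto (fun n => ∫ τ in a..b, F n τ) atTop
      (𝓝 (∫ τ in a..b, deriv ψ τ)) := by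
    apply intervalIntegral.tendsto_integral_filter_of_dominated_convergence (fun _ => (K : ℝ))
    · filter_upwards with n
      exact (((hcont.comp (continuous_id.add continuous_const)).sub hcont).const_smul
        (h n)⁻¹).aestronglyMeasurable
    · filter_upwards with n
      filter_upwards with τ _
      have hb : |ψ (τ + h n) - ψ τ| ≤ K * |h n| := by
        have := hψ.dist_le_mul (τ + h n) τ
        simpa [Real.dist_eq, add_sub_cancel_left] using this
      have ht' : 0 < |h n| := abs_pos.2 (hpos n).ne'
      rw [hF]
      simp only [smul_eq_mul, Real.norm_eq_abs, abs_mul, abs_inv]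
      calc |h n|⁻¹ * |ψ (τ + h n) - ψ τ| ≤ |h n|⁻¹ * (K * |h n|) :=
            mul_le_mul_of_nonneg_left hb (by positivity)
        _ = K := by field_simp
    · exact intervalIntegrable_const
    · have := hψ.ae_differentiableAt (μ := volume)
      filter_upwards [this] with τ hτ _
      exact (hasDerivAt_iff_tendsto_slope_zero.1 hτ.hasDerivAt).comp mdaux_tendsto_h
  -- computing the integrals of F n
  have step2 : ∀ n, ∫ τ in a..b, F n τ =
      (h n)⁻¹ • (∫ τ in b..(b + h n), ψ τ) - (h n)⁻¹ • (∫ τ in a..(a + h n), ψ τ) := by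
    intro n
    have e1 : (∫ τ in a..b, ψ (τ + h n)) = ∫ τ in (a + h n)..(b + h n), ψ τ :=
      intervalIntegral.integral_comp_add_right ψ (h n)
    have e2 : (∫ τ in a..b, ψ τ) + ∫ τ in b..(b + h n), ψ τ = ∫ τ in a..(b + h n), ψ τ :=
      intervalIntegral.integral_add_adjacent_intervals (hii a b) (hii b _)
    have e3 : (∫ τ in a..(a + h n), ψ τ) + ∫ τ in (a + h n)..(b + h n), ψ τ
        = ∫ τ in a..(b + h n), ψ τ :=
      intervalIntegral.integral_add_adjacent_intervals (hii a _) (hii _ _)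
    have i1 : IntervalIntegrable (fun τ => ψ (τ + h n)) volume a b := by
      simpa using (hii (a + h n) (b + h n)).comp_add_right (h n)
    have e4 : (∫ τ in a..b, F n τ)
        = (h n)⁻¹ • ((∫ τ in a..b, ψ (τ + h n)) - ∫ τ in a..b, ψ τ) := by
      rw [hF]
      rw [intervalIntegral.integral_smul, intervalIntegral.integral_sub i1 (hii a b)]
    rw [e4, e1, ← smul_sub]
    congr 1
    linarith
  -- limits of the boundary averages
  have step3 : ∀ c : ℝ, Tendsto (fun n => (h n)⁻¹ • (∫ τ in c..(c + h n), ψ τ)) atTop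
      (𝓝 (ψ c)) := by
    intro c
    have hd : HasDerivAt (fun u => ∫ τ in c..u, ψ τ) (ψ c) c :=
      (hψ.continuous.integral_hasStrictDerivAt c c).hasDerivAt
    have := (hasDerivAt_iff_tendsto_slope_zero.1 hd).comp mdaux_tendsto_h
    simpa [intervalIntegral.integral_same, Function.comp_def, hh] using this
  have step4 : Tendsto (fun n => ∫ τ in a..b, F n τ) atTop (𝓝 (ψ b - ψ a)) := by
    simp only [step2]
    exact (step3 b).sub (step3 a)
  exact tendsto_nhds_unique step4 step1

/-- If `ω : [0,1] → X` is Lipschitz, then the metric derivative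
`|ω'|(t) = lim_{h→0} d(ω(t+h), ω(t))/|h|` exists for a.e. `t ∈ [0,1]`, and for all
`0 ≤ t < s ≤ 1` we have `d(ω t, ω s) ≤ ∫_t^s |ω'|(τ) dτ`. -/
theorem lipschitz_metric_derivative_exists {X : Type*} [MetricSpace X]
    (ω : ℝ → X) (K : NNReal) (hω : LipschitzOnWith K ω (Set.Icc (0:ℝ) 1)) :
    ∃ md : ℝ → ℝ,
      (∀ᵐ t ∂(volume.restrict (Set.Icc (0:ℝ) 1)),
        Tendsto (fun h : ℝ => dist (ω (t + h)) (ω t) / |h|)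
          (nhdsWithin 0 {h : ℝ | h ≠ 0 ∧ t + h ∈ Set.Icc (0:ℝ) 1}) (nhds (md t))) ∧
      (∀ t s : ℝ, 0 ≤ t → t < s → s ≤ 1 →
        dist (ω t) (ω s) ≤ ∫ τ in t..s, md τ) := by
  classical
  -- a countable family of points of [0,1] hitting every point arbitrarily closely
  obtain ⟨e, he⟩ := exists_surjective_nat ℚ
  set p : ℕ → ℝ := fun n => max (min 1 ((e n : ℚ) : ℝ)) 0 with hp
  have hclamp : ∀ a b : ℝ, |max (min 1 a) 0 - max (min 1 b) 0| ≤ |a - b| := fun a b =>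
    le_trans (abs_max_sub_max_le_abs _ _ _)
      (by simpa using abs_min_sub_min_le_max 1 a 1 b)
  have hpmem : ∀ n, p n ∈ Set.Icc (0:ℝ) 1 := fun n =>
    ⟨le_max_right _ _, max_le (min_le_left _ _) zero_le_one⟩
  have hpdense : ∀ t ∈ Set.Icc (0:ℝ) 1, ∀ ε : ℝ, 0 < ε → ∃ n, |p n - t| < ε := by
    intro t ht ε hε
    obtain ⟨q, hq⟩ := exists_rat_near t hε
    obtain ⟨nq, rfl⟩ := he q
    refine ⟨nq, ?_⟩
    have h1 : p nq = max (min 1 ((e nq : ℚ) : ℝ)) 0 := rfl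
    have h2 : max (min 1 t) 0 = t := by
      rw [min_eq_right ht.2, max_eq_left ht.1]
    calc |p nq - t| = |max (min 1 ((e nq : ℚ) : ℝ)) 0 - max (min 1 t) 0| := by
          rw [h1, h2]
      _ ≤ |((e nq : ℚ):ℝ) - t| := hclamp _ _
      _ < ε := by rwa [abs_sub_comm]
  -- the auxiliary distance functions and their Lipschitz extensions
  set φ : ℕ → ℝ → ℝ := fun n u => dist (ω u) (ω (p n)) with hφ
  have hφlip : ∀ n, LipschitzOnWith K (φ n) (Set.Icc (0:ℝ) 1) := by
    intro n
    apply LipschitzOnWith.of_dist_le_mul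
    intro x hx y hy
    calc dist (φ n x) (φ n y) = |dist (ω x) (ω (p n)) - dist (ω y) (ω (p n))| := rfl
      _ ≤ dist (ω x) (ω y) := abs_dist_sub_le _ _ _
      _ ≤ K * dist x y := hω.dist_le_mul x hx y hy
  have hext : ∀ n, ∃ g : ℝ → ℝ, LipschitzWith K g ∧ EqOn (φ n) g (Set.Icc (0:ℝ) 1) :=
    fun n => (hφlip n).extend_real
  choose ψ hψlip hψeq using hext
  -- the candidate metric derivative
  set m : ℝ → ℝ := fun t => ⨆ n, |deriv (ψ n) t| with hm
  have hbdd : ∀ t, BddAbove (Set.range fun n => |deriv (ψ n) t|) := fun t =>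
    ⟨K, by rintro x ⟨n, rfl⟩; exact mdaux_abs_deriv_le (hψlip n) t⟩
  have hmK : ∀ t, m t ≤ K := fun t =>
    ciSup_le fun n => mdaux_abs_deriv_le (hψlip n) t
  have hm_ge : ∀ n t, |deriv (ψ n) t| ≤ m t := fun n t => le_ciSup (hbdd t) n
  have hm0 : ∀ t, 0 ≤ m t := fun t => le_trans (abs_nonneg _) (hm_ge 0 t)
  have hmmeas : Measurable m :=
    Measurable.iSup fun n => (measurable_deriv (ψ n)).abs
  have hmint : ∀ a b : ℝ, IntervalIntegrable m volume a b := by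
    intro a b
    refine (intervalIntegrable_const (c := (K:ℝ))).mono_fun
      hmmeas.aestronglyMeasurable ?_
    filter_upwards with τ
    simp only [Real.norm_eq_abs]
    rw [abs_of_nonneg (hm0 τ), abs_of_nonneg K.coe_nonneg]
    exact hmK τ
  have hderint : ∀ n (a b : ℝ), IntervalIntegrable (fun τ => deriv (ψ n) τ) volume a b := by
    intro n a b
    refine (intervalIntegrable_const (c := (K:ℝ))).mono_fun
      (measurable_deriv (ψ n)).aestronglyMeasurable ?_
    filter_upwards with τ
    simp only [Real.norm_eq_abs]
    rw [abs_of_nonneg K.coe_nonneg]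
    exact mdaux_abs_deriv_le (hψlip n) τ
  -- the key integral inequality
  have L1 : ∀ a b : ℝ, a ∈ Set.Icc (0:ℝ) 1 → b ∈ Set.Icc (0:ℝ) 1 → a ≤ b →
      dist (ω a) (ω b) ≤ ∫ τ in a..b, m τ := by
    intro a b ha hb hab
    refine le_of_forall_pos_le_add ?_
    intro ε hε
    obtain ⟨n, hn⟩ := hpdense a ha (ε / (2 * (K + 1))) (by positivity)
    have hφa : φ n a < ε / 2 := by
      have h1 : φ n a ≤ K * |a - p n| := by
        have := hω.dist_le_mul a ha (p n) (hpmem n)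
        simpa [hφ, Real.dist_eq] using this
      have h2 : (K:ℝ) * |a - p n| ≤ K * (ε / (2 * (K + 1))) := by
        apply mul_le_mul_of_nonneg_left _ K.coe_nonneg
        rw [abs_sub_comm]; exact hn.le
      have h3 : (K:ℝ) * (ε / (2 * (K + 1))) < ε / 2 := by
        have hK : (0:ℝ) ≤ K := K.coe_nonneg
        have he : (K:ℝ) * (ε / (2 * (K + 1))) = ε / 2 * ((K:ℝ) / (K + 1)) := by
          field_simp
        have hlt : (K:ℝ) / (K + 1) < 1 := by
          rw [div_lt_one (by positivity)]; linarith
        rw [he]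
        nlinarith
      linarith
    have hint : (∫ τ in a..b, deriv (ψ n) τ) ≤ ∫ τ in a..b, m τ := by
      apply intervalIntegral.integral_mono_on hab (hderint n a b) (hmint a b)
      intro τ _
      exact le_trans (le_abs_self _) (hm_ge n τ)
    have hftc := mdaux_lip_ftc (hψlip n) a b
    have heqa := hψeq n ha
    have heqb := hψeq n hb
    have htri : dist (ω a) (ω b) ≤ φ n b + φ n a := by
      rw [hφ]
      simp only
      rw [dist_comm (ω a) (ω b)]
      exact le_trans (dist_triangle_right _ _ _) le_rfl
    calc dist (ω a) (ω b) ≤ φ n b + φ n a := htri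
      _ = (φ n b - φ n a) + 2 * φ n a := by ring
      _ ≤ (ψ n b - ψ n a) + 2 * (ε / 2) := by
          rw [← heqa, ← heqb]
          have : φ n a ≤ ε / 2 := hφa.le
          linarith
      _ = (∫ τ in a..b, deriv (ψ n) τ) + ε := by rw [← hftc]; ring
      _ ≤ (∫ τ in a..b, m τ) + ε := by linarith
  refine ⟨m, ?_, ?_⟩
  swap
  · intro t s ht hts hs
    exact L1 t s ⟨ht, (hts.trans_le hs).le⟩ ⟨(ht.trans_lt hts).le, hs⟩ hts.le
  -- the a.e. existence of the metric derivative
  have hml : LocallyIntegrable m volume := by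
    intro x
    refine ⟨Icc (x - 1) (x + 1), Icc_mem_nhds (by linarith) (by linarith), ?_⟩
    exact (intervalIntegrable_iff_integrableOn_Icc_of_le (by linarith)).1 (hmint _ _)
  have hleb := IsUnifLocDoublingMeasure.ae_tendsto_average_norm_sub
    (μ := (volume : Measure ℝ)) hml 1
  have hdiffae : ∀ᵐ t ∂(volume : Measure ℝ), ∀ n, DifferentiableAt ℝ (ψ n) t :=
    ae_all_iff.2 fun n => (hψlip n).ae_differentiableAt
  have hnotend : ∀ᵐ t ∂(volume : Measure ℝ), t ∉ ({0, 1} : Set ℝ) := by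
    have h0 : volume ({0, 1} : Set ℝ) = 0 :=
      (Set.to_countable ({0,1} : Set ℝ)).measure_zero _
    exact (MeasureTheory.measure_eq_zero_iff_ae_notMem).1 h0
  filter_upwards [ae_restrict_of_ae hleb, ae_restrict_of_ae hdiffae, ae_restrict_of_ae hnotend,
    ae_restrict_mem measurableSet_Icc] with t hlebt hdifft hnott htIcc
  have htIoo : t ∈ Ioo (0:ℝ) 1 := by
    rcases htIcc with ⟨h1, h2⟩
    constructor
    · rcases h1.lt_or_eq with h | h
      · exact h
      · exact absurd (by simp [← h]) hnott
    · rcases h2.lt_or_eq with h | h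
      · exact h
      · exact absurd (by simp [h]) hnott
  set S : Set ℝ := {h : ℝ | h ≠ 0 ∧ t + h ∈ Set.Icc (0:ℝ) 1} with hS
  set l : Filter ℝ := nhdsWithin 0 S with hl
  have hSsub : Ioo (0:ℝ) (1 - t) ⊆ S := by
    rintro h ⟨h1, h2⟩
    exact ⟨h1.ne', ⟨by linarith [htIcc.1], by linarith⟩⟩
  have hne : l.NeBot := by
    rw [hl]
    apply mem_closure_iff_nhdsWithin_neBot.1
    apply closure_mono hSsub
    rw [closure_Ioo (by linarith [htIoo.2] : (0:ℝ) ≠ 1 - t)]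
    exact ⟨le_rfl, by linarith [htIoo.2]⟩
  set f : ℝ → ℝ := fun h => dist (ω (t + h)) (ω t) / |h| with hf
  have hmemS : ∀ᶠ h in l, h ∈ S := self_mem_nhdsWithin
  have hfK : ∀ᶠ h in l, f h ≤ K := by
    filter_upwards [hmemS] with h hh
    have hd : dist (ω (t + h)) (ω t) ≤ K * |h| := by
      have := hω.dist_le_mul (t + h) hh.2 t htIcc
      simpa [Real.dist_eq, add_sub_cancel_left] using this
    rw [hf]
    rw [div_le_iff₀ (abs_pos.2 hh.1)]
    linarith
  have hf0 : ∀ᶠ h in l, 0 ≤ f h := Eventually.of_forall fun h => by positivity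
  have hbddle : IsBoundedUnder (· ≤ ·) l f := ⟨(K:ℝ), eventually_map.2 hfK⟩
  have hbddge : IsBoundedUnder (· ≥ ·) l f := ⟨0, eventually_map.2 hf0⟩
  have hlsub : l ≤ nhdsWithin (0:ℝ) {0}ᶜ := nhdsWithin_mono 0 fun h hh => hh.1
  -- lower bound on the liminf
  have hliminf : m t ≤ liminf f l := by
    refine ciSup_le fun n => ?_
    have hgt : Tendsto (fun h : ℝ => |h⁻¹ • (ψ n (t + h) - ψ n t)|) l (𝓝 |deriv (ψ n) t|) :=
      ((hasDerivAt_iff_tendsto_slope_zero.1 (hdifft n).hasDerivAt).mono_left hlsub).abs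
    have hge : ∀ᶠ h in l, |h⁻¹ • (ψ n (t + h) - ψ n t)| ≤ f h := by
      filter_upwards [hmemS] with h hh
      have e1 : ψ n (t + h) = φ n (t + h) := (hψeq n hh.2).symm
      have e2 : ψ n t = φ n t := (hψeq n htIcc).symm
      rw [smul_eq_mul, abs_mul, abs_inv, e1, e2, hf]
      show |h|⁻¹ * |φ n (t + h) - φ n t| ≤ dist (ω (t + h)) (ω t) / |h|
      rw [div_eq_inv_mul]
      refine mul_le_mul_of_nonneg_left ?_ (by positivity)
      exact abs_dist_sub_le _ _ _
    calc |deriv (ψ n) t|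
        = liminf (fun h : ℝ => |h⁻¹ • (ψ n (t + h) - ψ n t)|) l := hgt.liminf_eq.symm
      _ ≤ liminf f l :=
          liminf_le_liminf hge hgt.isBoundedUnder_ge hbddle.isCoboundedUnder_ge
  -- upper bound on the limsup, via the Lebesgue differentiation theorem
  have habs : Tendsto (fun h : ℝ => |h|) l (nhdsWithin 0 (Set.Ioi 0)) := by
    apply tendsto_nhdsWithin_of_tendsto_nhds_of_eventually_within
    · have : Tendsto (fun h : ℝ => |h|) (nhds 0) (nhds |(0:ℝ)|) :=
        continuous_abs.tendsto 0
      simpa using this.mono_left (hl ▸ nhdsWithin_le_nhds)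
    · filter_upwards [hmemS] with h hh
      exact abs_pos.2 hh.1
  have havg : Tendsto (fun h : ℝ => ⨍ y in Metric.closedBall t |h|, ‖m y - m t‖) l (𝓝 0) := by
    refine hlebt (fun _ => t) (fun h => |h|) habs ?_
    filter_upwards with h
    simp [Metric.mem_closedBall]
  have hkey : ∀ᶠ h in l,
      f h ≤ m t + 2 * ⨍ y in Metric.closedBall t |h|, ‖m y - m t‖ := by
    filter_upwards [hmemS] with h hh
    set a := min t (t + h) with ha
    set b := max t (t + h) with hb
    have hab : a ≤ b := min_le_max
    have hh0 : (0:ℝ) < |h| := abs_pos.2 hh.1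
    have hba : b - a = |h| := by
      rcases le_total 0 h with hsgn | hsgn
      · rw [ha, hb, min_eq_left (by linarith), max_eq_right (by linarith),
          abs_of_nonneg hsgn]
        ring
      · rw [ha, hb, min_eq_right (by linarith), max_eq_left (by linarith),
          abs_of_nonpos hsgn]
        ring
    have hd1 : dist (ω (t + h)) (ω t) ≤ ∫ τ in a..b, m τ := by
      rcases le_total 0 h with hsgn | hsgn
      · rw [ha, hb, min_eq_left (by linarith), max_eq_right (by linarith), dist_comm]
        exact L1 t (t + h) htIcc hh.2 (by linarith)
      · rw [ha, hb, min_eq_right (by linarith), max_eq_left (by linarith)]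
        exact L1 (t + h) t hh.2 htIcc (by linarith)
    have hsplit : (∫ τ in a..b, m τ)
        = (∫ τ in a..b, (m τ - m t)) + (b - a) * m t := by
      rw [intervalIntegral.integral_sub (hmint a b) intervalIntegrable_const,
        intervalIntegral.integral_const]
      simp only [smul_eq_mul]
      ring
    have hball : Metric.closedBall t |h| = Icc (t - |h|) (t + |h|) := Real.closedBall_eq_Icc
    have hsubset : Ioc a b ⊆ Metric.closedBall t |h| := by
      rw [hball]
      intro τ hτ
      have hlo : t - |h| ≤ a := le_min (by linarith) (by linarith [neg_abs_le h])
      have hhi : b ≤ t + |h| := max_le (by linarith) (by linarith [le_abs_self h])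
      exact ⟨by linarith [hτ.1], by linarith [hτ.2]⟩
    have hintball : IntegrableOn (fun τ => |m τ - m t|) (Metric.closedBall t |h|) volume := by
      rw [hball]
      exact (intervalIntegrable_iff_integrableOn_Icc_of_le
        (by linarith : t - |h| ≤ t + |h|)).1 ((hmint _ _).sub intervalIntegrable_const).abs
    have h2 : (∫ τ in a..b, (m τ - m t))
        ≤ ∫ τ in Metric.closedBall t |h|, |m τ - m t| := by
      rw [intervalIntegral.integral_of_le hab]
      calc (∫ τ in Ioc a b, (m τ - m t))
          ≤ ∫ τ in Ioc a b, |m τ - m t| := by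
            apply setIntegral_mono ((hmint a b).sub intervalIntegrable_const).1
              ((hmint a b).sub intervalIntegrable_const).abs.1
            intro τ
            exact le_abs_self _
        _ ≤ ∫ τ in Metric.closedBall t |h|, |m τ - m t| :=
            setIntegral_mono_set hintball (Eventually.of_forall fun τ => abs_nonneg _)
              hsubset.eventuallyLE
    have hvol : (volume (Metric.closedBall t |h|)).toReal = 2 * |h| := by
      rw [Real.volume_closedBall, ENNReal.toReal_ofReal (by positivity)]
    have h3 : (∫ τ in Metric.closedBall t |h|, |m τ - m t|)
        = 2 * |h| * ⨍ y in Metric.closedBall t |h|, ‖m y - m t‖ := by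
      rw [setAverage_eq]
      simp only [smul_eq_mul, Real.norm_eq_abs, hvol]
      field_simp
      rw [measureReal_def, hvol]; ring
    rw [hf]
    rw [div_le_iff₀ hh0]
    have hnn : 0 ≤ ⨍ y in Metric.closedBall t |h|, ‖m y - m t‖ := by
      rw [setAverage_eq]
      refine smul_nonneg (by positivity) ?_
      exact setIntegral_nonneg Metric.isClosed_closedBall.measurableSet fun y _ => norm_nonneg _
    nlinarith [hd1, hsplit, h2, h3, hba, hm0 t]
  have htends : Tendsto
      (fun h : ℝ => m t + 2 * ⨍ y in Metric.closedBall t |h|, ‖m y - m t‖) l (𝓝 (m t)) := by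
    have h1 := (tendsto_const_nhds (x := m t) (f := l)).add (havg.const_mul 2)
    simpa using h1
  have hlimsup : limsup f l ≤ m t :=
    calc limsup f l
        ≤ limsup (fun h : ℝ => m t + 2 * ⨍ y in Metric.closedBall t |h|, ‖m y - m t‖) l :=
          limsup_le_limsup hkey hbddge.isCoboundedUnder_le htends.isBoundedUnder_le
      _ = m t := htends.limsup_eq
  exact tendsto_of_le_liminf_of_limsup_le hliminf hlimsup hbddle hbddge
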